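/- Soundness of guarded patterns: extend the declarative semantics with guarded patterns (p where g), where θ ⊢ (p where g) ≈ t iff θ ⊢ p ≈ t and the closed guard g[θ] evaluates to true. Extend the machine with actions check(g) such that matching (p where g) against t pushes [match p t, check g], and check(g) continues if g[θ] evaluates to true and backtracks otherwise. Then: if the machine started from (∅, [], [match p t]) reaches success(θ), then θ ⊢ p ≈ t in the extended declarative semantics. -/

import Mathlib

namespace PyPM

inductive Tm where
  | app : String → List Tm → Tm

/-- Expressions in guards: attribute accesses on terms/variables and arithmetic. -/
inductive GExp where
  | attrT : Tm → String → GExp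
  | attrV : String → String → GExp
  | add : GExp → GExp → GExp
  | sub : GExp → GExp → GExp

/-- Guards: boolean constraints over expressions. -/
inductive Guard where
  | eq : GExp → GExp → Guard
  | lt : GExp → GExp → Guard
  | and : Guard → Guard → Guard
  | or : Guard → Guard → Guard
  | not : Guard → Guard

/-- Patterns, extended with guarded patterns (p where g). -/
inductive Pat where
  | var : String → Pat
  | app : String → List Pat → Pat
  | alt : Pat → Pat → Pat
  | guard : Pat → Guard → Pat

abbrev Subst := String → Option Tm

def emptySubst : Subst := fun _ => none

def Subst.update (θ : Subst) (x : String) (t : Tm) : Subst :=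
  fun y => if y = x then some t else θ y

/-- An attribute interpretation assigns a partial natural-number value to each
attribute name on each term. -/
abbrev AttrInterp := String → Tm → Option Nat

/-- Evaluation of the substitution instance e[θ] of an expression: variable
attribute accesses are resolved through θ. -/
def evalExp (I : AttrInterp) (θ : Subst) : GExp → Option Nat
  | .attrT t α => I α t
  | .attrV x α => (θ x).bind (I α)
  | .add e1 e2 => do pure ((← evalExp I θ e1) + (← evalExp I θ e2))
  | .sub e1 e2 => do pure ((← evalExp I θ e1) - (← evalExp I θ e2))

/-- Boolean evaluation of the substitution instance g[θ] of a guard. -/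
def evalGuard (I : AttrInterp) (θ : Subst) : Guard → Option Bool
  | .eq e1 e2 => do pure (decide ((← evalExp I θ e1) = (← evalExp I θ e2)))
  | .lt e1 e2 => do pure (decide ((← evalExp I θ e1) < (← evalExp I θ e2)))
  | .and g1 g2 => do pure ((← evalGuard I θ g1) && (← evalGuard I θ g2))
  | .or g1 g2 => do pure ((← evalGuard I θ g1) || (← evalGuard I θ g2))
  | .not g => do pure (!(← evalGuard I θ g))

/-- Declarative matching semantics, extended with guarded patterns. -/
inductive Matches (I : AttrInterp) : Subst → Pat → Tm → Prop where
  | var {θ : Subst} {x : String} {t : Tm} :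
      θ x = some t → Matches I θ (.var x) t
  | app {θ : Subst} {f : String} {ps : List Pat} {ts : List Tm}
      (hlen : ps.length = ts.length)
      (hargs : ∀ i (h1 : i < ps.length) (h2 : i < ts.length), Matches I θ ps[i] ts[i]) :
      Matches I θ (.app f ps) (.app f ts)
  | alt1 {θ : Subst} {p p' : Pat} {t : Tm} :
      Matches I θ p t → Matches I θ (.alt p p') t
  | alt2 {θ : Subst} {p p' : Pat} {t : Tm} :
      Matches I θ p' t → Matches I θ (.alt p p') t
  | guard {θ : Subst} {p : Pat} {g : Guard} {t : Tm} :
      Matches I θ p t → evalGuard I θ g = some true →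
      Matches I θ (.guard p g) t

/-- Actions: match a pattern against a term, or check a guard. -/
inductive Action where
  | doMatch : Pat → Tm → Action
  | check : Guard → Action

abbrev Cont := List Action
abbrev Frame := Subst × Cont
abbrev Stack := List Frame

inductive St where
  | success : Subst → St
  | failure : St
  | running : Subst → Stack → Cont → St

def backtrack : Stack → St
  | [] => .failure
  | (θ, k) :: stk => .running θ stk k

/-- The step relation of the machine, extended with guard checking. -/
inductive Step (I : AttrInterp) : St → St → Prop where
  | success {θ stk} :
      Step I (.running θ stk []) (.success θ)
  | varBind {θ : Subst} {stk x t k} :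
      θ x = none →
      Step I (.running θ stk (.doMatch (.var x) t :: k)) (.running (θ.update x t) stk k)
  | varBound {θ : Subst} {stk x t k} :
      θ x = some t →
      Step I (.running θ stk (.doMatch (.var x) t :: k)) (.running θ stk k)
  | varConflict {θ : Subst} {stk x t t' k} :
      θ x = some t' → t' ≠ t →
      Step I (.running θ stk (.doMatch (.var x) t :: k)) (backtrack stk)
  | fn {θ stk f ps ts k} :
      ps.length = ts.length →
      Step I (.running θ stk (.doMatch (.app f ps) (.app f ts) :: k))
           (.running θ stk (((ps.zip ts).map fun pt => .doMatch pt.1 pt.2) ++ k))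
  | fnConflict {θ stk f g ps ts k} :
      f ≠ g ∨ ps.length ≠ ts.length →
      Step I (.running θ stk (.doMatch (.app f ps) (.app g ts) :: k)) (backtrack stk)
  | alt {θ stk p p' t k} :
      Step I (.running θ stk (.doMatch (.alt p p') t :: k))
           (.running θ ((θ, .doMatch p' t :: k) :: stk) (.doMatch p t :: k))
  | guard {θ stk p g t k} :
      Step I (.running θ stk (.doMatch (.guard p g) t :: k))
           (.running θ stk (.doMatch p t :: .check g :: k))
  | checkTrue {θ : Subst} {stk g k} :
      evalGuard I θ g = some true →
      Step I (.running θ stk (.check g :: k)) (.running θ stk k)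
  | checkFalse {θ : Subst} {stk g k} :
      ¬ evalGuard I θ g = some true →
      Step I (.running θ stk (.check g :: k)) (backtrack stk)

end PyPM

open PyPM

def Extends (θ0 θ : Subst) : Prop := ∀ x t, θ0 x = some t → θ x = some t

theorem Extends.refl (θ : Subst) : Extends θ θ := fun _ _ h => h

theorem evalExp_mono (I : AttrInterp) {θ0 θ : Subst} (hext : Extends θ0 θ)
    (e : GExp) {n : Nat} (h : evalExp I θ0 e = some n) : evalExp I θ e = some n := by
  induction e generalizing n with
  | attrT t α => exact h
  | attrV x α =>
    simp only [evalExp, Option.bind_eq_some_iff] at h ⊢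
    obtain ⟨t, ht, hI⟩ := h
    exact ⟨t, hext x t ht, hI⟩
  | add e1 e2 ih1 ih2 =>
    simp only [evalExp] at h ⊢
    cases h1 : evalExp I θ0 e1 with
    | none => simp [h1] at h
    | some a =>
      cases h2 : evalExp I θ0 e2 with
      | none => simp [h1, h2] at h
      | some b => rw [ih1 h1, ih2 h2]; simpa [h1, h2] using h
  | sub e1 e2 ih1 ih2 =>
    simp only [evalExp] at h ⊢
    cases h1 : evalExp I θ0 e1 with
    | none => simp [h1] at h
    | some a =>
      cases h2 : evalExp I θ0 e2 with
      | none => simp [h1, h2] at h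
      | some b => rw [ih1 h1, ih2 h2]; simpa [h1, h2] using h

theorem evalGuard_mono (I : AttrInterp) {θ0 θ : Subst} (hext : Extends θ0 θ)
    (g : Guard) {b : Bool} (h : evalGuard I θ0 g = some b) : evalGuard I θ g = some b := by
  induction g generalizing b with
  | eq e1 e2 =>
    simp only [evalGuard] at h ⊢
    cases h1 : evalExp I θ0 e1 with
    | none => simp [h1] at h
    | some a =>
      cases h2 : evalExp I θ0 e2 with
      | none => simp [h1, h2] at h
      | some c =>
        rw [evalExp_mono I hext _ h1, evalExp_mono I hext _ h2]
        simpa [h1, h2] using h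
  | lt e1 e2 =>
    simp only [evalGuard] at h ⊢
    cases h1 : evalExp I θ0 e1 with
    | none => simp [h1] at h
    | some a =>
      cases h2 : evalExp I θ0 e2 with
      | none => simp [h1, h2] at h
      | some c =>
        rw [evalExp_mono I hext _ h1, evalExp_mono I hext _ h2]
        simpa [h1, h2] using h
  | and g1 g2 ih1 ih2 =>
    simp only [evalGuard] at h ⊢
    cases h1 : evalGuard I θ0 g1 with
    | none => simp [h1] at h
    | some a =>
      cases h2 : evalGuard I θ0 g2 with
      | none => simp [h1, h2] at h
      | some c => rw [ih1 h1, ih2 h2]; simpa [h1, h2] using h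
  | or g1 g2 ih1 ih2 =>
    simp only [evalGuard] at h ⊢
    cases h1 : evalGuard I θ0 g1 with
    | none => simp [h1] at h
    | some a =>
      cases h2 : evalGuard I θ0 g2 with
      | none => simp [h1, h2] at h
      | some c => rw [ih1 h1, ih2 h2]; simpa [h1, h2] using h
  | not g ih =>
    simp only [evalGuard] at h ⊢
    cases h1 : evalGuard I θ0 g with
    | none => simp [h1] at h
    | some a => rw [ih h1]; simpa [h1] using h

def HoldsA (I : AttrInterp) (θ : Subst) : Action → Prop
  | .doMatch p t => Matches I θ p t
  | .check g => evalGuard I θ g = some true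

def AllHold (I : AttrInterp) (θ : Subst) (k : Cont) : Prop := ∀ a ∈ k, HoldsA I θ a

def StackInv (I : AttrInterp) (θ : Subst) : Stack → Prop
  | [] => False
  | (θ0, k) :: stk => (Extends θ0 θ ∧ AllHold I θ k) ∨ StackInv I θ stk

def MInv (I : AttrInterp) (θ : Subst) : St → Prop
  | .success θ' => θ' = θ
  | .failure => False
  | .running θ0 stk k => (Extends θ0 θ ∧ AllHold I θ k) ∨ StackInv I θ stk

theorem minv_backtrack {I : AttrInterp} {θ : Subst} {stk : Stack}
    (h : MInv I θ (backtrack stk)) : StackInv I θ stk := by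
  cases stk with
  | nil => exact h
  | cons fr stk => exact h

theorem allHold_cons {I θ a k} (ha : HoldsA I θ a) (hk : AllHold I θ k) :
    AllHold I θ (a :: k) := by
  intro b hb
  rcases List.mem_cons.mp hb with rfl | hb
  · exact ha
  · exact hk _ hb

theorem minv_step {I : AttrInterp} {θ : Subst} {s s' : St}
    (hs : Step I s s') (h : MInv I θ s') : MInv I θ s := by
  cases hs with
  | @success θ0 stk =>
    subst h
    exact Or.inl ⟨Extends.refl _, fun a ha => absurd ha (List.not_mem_nil (a := a))⟩
  | @varBind θ0 stk x t k hx =>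
    rcases h with ⟨hext, hk⟩ | hstk
    · refine Or.inl ⟨fun y s hy => hext y s (by simp [Subst.update, hy]; rintro rfl; simp [hy] at hx), ?_⟩
      refine allHold_cons ?_ hk
      exact Matches.var (hext x t (by simp [Subst.update]))
    · exact Or.inr hstk
  | @varBound θ0 stk x t k hx =>
    rcases h with ⟨hext, hk⟩ | hstk
    · exact Or.inl ⟨hext, allHold_cons (Matches.var (hext x t hx)) hk⟩
    · exact Or.inr hstk
  | varConflict _ _ => exact Or.inr (minv_backtrack h)
  | @fn θ0 stk f ps ts k hlen =>
    rcases h with ⟨hext, hk⟩ | hstk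
    · refine Or.inl ⟨hext, allHold_cons ?_ (fun a ha => hk a (List.mem_append_right _ ha))⟩
      refine Matches.app hlen (fun i h1 h2 => ?_)
      have : HoldsA I θ (.doMatch ps[i] ts[i]) := by
        apply hk
        apply List.mem_append_left
        refine List.mem_map.mpr ⟨(ps[i], ts[i]), ?_, rfl⟩
        rw [List.mem_iff_getElem]
        exact ⟨i, by simp [List.length_zip, hlen, h2], by simp⟩
      exact this
    · exact Or.inr hstk
  | fnConflict _ => exact Or.inr (minv_backtrack h)
  | @alt θ0 stk p p' t k =>
    rcases h with ⟨hext, hk⟩ | hstk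
    · refine Or.inl ⟨hext, allHold_cons ?_ (fun a ha => hk a (List.mem_cons_of_mem _ ha))⟩
      exact Matches.alt1 (hk _ List.mem_cons_self)
    · rcases hstk with ⟨hext, hk⟩ | hstk
      · refine Or.inl ⟨hext, allHold_cons ?_ (fun a ha => hk a (List.mem_cons_of_mem _ ha))⟩
        exact Matches.alt2 (hk _ List.mem_cons_self)
      · exact Or.inr hstk
  | @guard θ0 stk p g t k =>
    rcases h with ⟨hext, hk⟩ | hstk
    · refine Or.inl ⟨hext, allHold_cons ?_ (fun a ha => hk a (by simp_all))⟩
      have hp : HoldsA I θ (.doMatch p t) := hk _ List.mem_cons_self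
      have hg : HoldsA I θ (.check g) := hk _ (by simp)
      exact Matches.guard hp hg
    · exact Or.inr hstk
  | @checkTrue θ0 stk g k hg =>
    rcases h with ⟨hext, hk⟩ | hstk
    · exact Or.inl ⟨hext, allHold_cons (evalGuard_mono I hext g hg) hk⟩
    · exact Or.inr hstk
  | checkFalse _ => exact Or.inr (minv_backtrack h)

/-- Soundness of the machine extended with guarded patterns (success case). -/
theorem guarded_soundness_success (I : AttrInterp) {p : Pat} {t : Tm} {θ : Subst}
    (h : Relation.TransGen (Step I) (.running emptySubst [] [.doMatch p t]) (.success θ)) :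
    Matches I θ p t := by
  have hinv : MInv I θ (.running emptySubst [] [.doMatch p t]) := by
    refine Relation.TransGen.head_induction_on h ?_ ?_
    · intro s hs
      exact minv_step hs rfl
    · intro s s' hs _ ih
      exact minv_step hs ih
  rcases hinv with ⟨_, hk⟩ | hstk
  · exact hk _ List.mem_cons_self
  · exact (hstk : False).elim
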